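/- Define $f : \mathbb{Z}^2 \to \mathbb{R}$ by $f(x,y) = \log(x^2 + y^2 - 1/2)$ for $(x,y) \ne (0,0)$ and $f(0,0) = -5$. Then for every $(x,y) \in \mathbb{Z}^2 \setminus \{(0,0)\}$, $\frac{1}{4}\big(f(x+1,y) + f(x-1,y) + f(x,y+1) + f(x,y-1)\big) \le f(x,y)$. More precisely, writing $\Delta_{x,y} = \frac{1}{4}(f(x+1,y)+f(x-1,y)+f(x,y+1)+f(x,y-1)) - f(x,y)$: if $|x|+|y| \ge 2$ then $\exp(4\Delta_{x,y}) = 1 - \frac{64(x^2-y^2)^2}{(2x^2+2y^2-1)^4} \le 1$, and if $|x|+|y| = 1$ then $\exp(4\Delta_{x,y}) = 126\,e^{-5} < 0.85$. -/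
import Mathlib


/-- The function `f : ℤ² → ℝ` given by `f(x,y) = log(x² + y² - 1/2)` for `(x,y) ≠ (0,0)`
and `f(0,0) = -5`. -/
noncomputable def srwLyapunov (x y : ℤ) : ℝ :=
  if x = 0 ∧ y = 0 then -5 else Real.log ((x : ℝ) ^ 2 + (y : ℝ) ^ 2 - 1/2)

/-- The discrete Laplacian-type increment
`Δ_{x,y} = ¼(f(x+1,y) + f(x-1,y) + f(x,y+1) + f(x,y-1)) - f(x,y)`. -/
noncomputable def srwLyapunovDelta (x y : ℤ) : ℝ :=
  (srwLyapunov (x + 1) y + srwLyapunov (x - 1) y +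
     srwLyapunov x (y + 1) + srwLyapunov x (y - 1)) / 4 - srwLyapunov x y

lemma srw_ne (x y : ℤ) (h : ¬(x = 0 ∧ y = 0)) :
    srwLyapunov x y = Real.log ((x : ℝ) ^ 2 + (y : ℝ) ^ 2 - 1/2) := if_neg h

lemma srw_pos (x y : ℤ) (h : ¬(x = 0 ∧ y = 0)) :
    (0 : ℝ) < (x : ℝ) ^ 2 + (y : ℝ) ^ 2 - 1/2 := by
  have h1 : (1 : ℤ) ≤ x ^ 2 + y ^ 2 := by
    rcases not_and_or.mp h with h | h
    · nlinarith [Int.one_le_abs h, sq_abs x, sq_nonneg y, abs_nonneg x]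
    · nlinarith [Int.one_le_abs h, sq_abs y, sq_nonneg x, abs_nonneg y]
  have h2 : (1 : ℝ) ≤ (x : ℝ) ^ 2 + (y : ℝ) ^ 2 := by exact_mod_cast h1
  linarith

lemma exp_comb (a b c d e : ℝ) (ha : 0 < a) (hb : 0 < b) (hc : 0 < c) (hd : 0 < d)
    (he : 0 < e) :
    Real.exp (4 * ((Real.log a + Real.log b + Real.log c + Real.log d) / 4 - Real.log e))
      = a * b * c * d / e ^ 4 := by
  have h : 4 * ((Real.log a + Real.log b + Real.log c + Real.log d) / 4 - Real.log e)
      = Real.log a + Real.log b + Real.log c + Real.log d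
        - (Real.log e + Real.log e + Real.log e + Real.log e) := by ring
  rw [h, Real.exp_sub, Real.exp_add, Real.exp_add, Real.exp_add, Real.exp_add, Real.exp_add,
    Real.exp_add, Real.exp_log ha, Real.exp_log hb, Real.exp_log hc, Real.exp_log hd,
    Real.exp_log he]
  ring

lemma aux126 : Real.log (7/2) + Real.log (3/2) + Real.log (3/2) - 4 * Real.log (1/2)
    = Real.log 126 := by
  have h2 : Real.log (1/2) = -Real.log 2 := by rw [one_div, Real.log_inv]
  have h7 : Real.log (7/2) = Real.log 7 - Real.log 2 :=
    Real.log_div (by norm_num) (by norm_num)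
  have h3 : Real.log (3/2) = Real.log 3 - Real.log 2 :=
    Real.log_div (by norm_num) (by norm_num)
  have h126 : Real.log 126 = Real.log 2 + (2 * Real.log 3 + Real.log 7) := by
    rw [show (126 : ℝ) = 2 * (3 ^ 2 * 7) by norm_num,
      Real.log_mul (by norm_num) (by norm_num), Real.log_mul (by norm_num) (by norm_num),
      Real.log_pow]
    push_cast; ring
  linarith

lemma bnd126 : (126 : ℝ) * Real.exp (-5) < 0.85 := by
  have h1 : (2.7182818283 : ℝ) < Real.exp 1 := Real.exp_one_gt_d9
  have h5 : Real.exp (5 : ℝ) = Real.exp 1 ^ 5 := by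
    rw [← Real.exp_nat_mul]; norm_num
  have h2 : (2.7182818283 : ℝ) ^ 5 < Real.exp 1 ^ 5 := by
    gcongr
  have h3 : (148.4 : ℝ) < Real.exp (5 : ℝ) := by
    rw [h5]; nlinarith
  have h4 : Real.exp (-5 : ℝ) = 1 / Real.exp (5 : ℝ) := by
    rw [Real.exp_neg]; ring
  have hpos : (0 : ℝ) < Real.exp (5 : ℝ) := Real.exp_pos _
  rw [h4, mul_one_div, div_lt_iff₀ hpos]
  nlinarith

/-- **Supermartingale computation.** For every `(x,y) ∈ ℤ² \ {(0,0)}` the average of `f`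
over the four neighbours of `(x,y)` is at most `f(x,y)`; more precisely, if `|x|+|y| ≥ 2`
then `exp(4Δ_{x,y}) = 1 - 64(x² - y²)²/(2x² + 2y² - 1)⁴ ≤ 1`, and if `|x|+|y| = 1` then
`exp(4Δ_{x,y}) = 126 e⁻⁵ < 0.85`. -/
theorem srwLyapunov_superharmonic (x y : ℤ) (hxy : ¬(x = 0 ∧ y = 0)) :
    ((srwLyapunov (x + 1) y + srwLyapunov (x - 1) y +
        srwLyapunov x (y + 1) + srwLyapunov x (y - 1)) / 4 ≤ srwLyapunov x y) ∧
    (2 ≤ |x| + |y| →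
      Real.exp (4 * srwLyapunovDelta x y)
          = 1 - 64 * ((x : ℝ) ^ 2 - (y : ℝ) ^ 2) ^ 2 /
              (2 * (x : ℝ) ^ 2 + 2 * (y : ℝ) ^ 2 - 1) ^ 4 ∧
      Real.exp (4 * srwLyapunovDelta x y) ≤ 1) ∧
    (|x| + |y| = 1 →
      Real.exp (4 * srwLyapunovDelta x y) = 126 * Real.exp (-5) ∧
      (126 : ℝ) * Real.exp (-5) < 0.85) := by
  have key : Real.exp (4 * srwLyapunovDelta x y) ≤ 1 →
      (srwLyapunov (x + 1) y + srwLyapunov (x - 1) y +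
        srwLyapunov x (y + 1) + srwLyapunov x (y - 1)) / 4 ≤ srwLyapunov x y := by
    intro h
    have h0 : 4 * srwLyapunovDelta x y ≤ 0 := Real.exp_le_one_iff.mp h
    have h1 : srwLyapunovDelta x y ≤ 0 := by linarith
    unfold srwLyapunovDelta at h1
    linarith
  by_cases h2 : 2 ≤ |x| + |y|
  · -- case |x|+|y| ≥ 2
    have hA : ¬(x + 1 = 0 ∧ y = 0) := by
      rintro ⟨hx, hy⟩; rw [show x = -1 by omega, hy] at h2; norm_num at h2
    have hB : ¬(x - 1 = 0 ∧ y = 0) := by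
      rintro ⟨hx, hy⟩; rw [show x = 1 by omega, hy] at h2; norm_num at h2
    have hC : ¬(x = 0 ∧ y + 1 = 0) := by
      rintro ⟨hx, hy⟩; rw [show y = -1 by omega, hx] at h2; norm_num at h2
    have hD : ¬(x = 0 ∧ y - 1 = 0) := by
      rintro ⟨hx, hy⟩; rw [show y = 1 by omega, hx] at h2; norm_num at h2
    have pA := srw_pos (x + 1) y hA
    have pB := srw_pos (x - 1) y hB
    have pC := srw_pos x (y + 1) hC
    have pD := srw_pos x (y - 1) hD
    have pE := srw_pos x y hxy
    push_cast at pA pB pC pD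
    have hExp : Real.exp (4 * srwLyapunovDelta x y)
        = (((x : ℝ) + 1) ^ 2 + (y : ℝ) ^ 2 - 1/2) * (((x : ℝ) - 1) ^ 2 + (y : ℝ) ^ 2 - 1/2)
          * ((x : ℝ) ^ 2 + ((y : ℝ) + 1) ^ 2 - 1/2) * ((x : ℝ) ^ 2 + ((y : ℝ) - 1) ^ 2 - 1/2)
          / ((x : ℝ) ^ 2 + (y : ℝ) ^ 2 - 1/2) ^ 4 := by
      unfold srwLyapunovDelta
      rw [srw_ne _ _ hA, srw_ne _ _ hB, srw_ne _ _ hC, srw_ne _ _ hD, srw_ne _ _ hxy]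
      push_cast
      exact exp_comb _ _ _ _ _ pA pB pC pD pE
    have hEq : Real.exp (4 * srwLyapunovDelta x y)
        = 1 - 64 * ((x : ℝ) ^ 2 - (y : ℝ) ^ 2) ^ 2 /
            (2 * (x : ℝ) ^ 2 + 2 * (y : ℝ) ^ 2 - 1) ^ 4 := by
      rw [hExp]
      have hE0 : (2 * (x : ℝ) ^ 2 + 2 * (y : ℝ) ^ 2 - 1) ≠ 0 := by
        intro h; apply pE.ne'; linarith
      have hE0' : ((x : ℝ) ^ 2 + (y : ℝ) ^ 2 - 1/2) ≠ 0 := pE.ne'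
      have h4a : ((x : ℝ) ^ 2 + (y : ℝ) ^ 2 - 1/2) ^ 4 ≠ 0 := pow_ne_zero _ hE0'
      have h4b : (2 * (x : ℝ) ^ 2 + 2 * (y : ℝ) ^ 2 - 1) ^ 4 ≠ 0 := pow_ne_zero _ hE0
      have hr : 1 - 64 * ((x : ℝ) ^ 2 - (y : ℝ) ^ 2) ^ 2 /
            (2 * (x : ℝ) ^ 2 + 2 * (y : ℝ) ^ 2 - 1) ^ 4
          = ((2 * (x : ℝ) ^ 2 + 2 * (y : ℝ) ^ 2 - 1) ^ 4
              - 64 * ((x : ℝ) ^ 2 - (y : ℝ) ^ 2) ^ 2) /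
            (2 * (x : ℝ) ^ 2 + 2 * (y : ℝ) ^ 2 - 1) ^ 4 := by
        rw [sub_div, div_self h4b]
      rw [hr, div_eq_div_iff h4a h4b]
      ring
    have hle : Real.exp (4 * srwLyapunovDelta x y) ≤ 1 := by
      rw [hEq]
      have : (0 : ℝ) ≤ 64 * ((x : ℝ) ^ 2 - (y : ℝ) ^ 2) ^ 2 /
          (2 * (x : ℝ) ^ 2 + 2 * (y : ℝ) ^ 2 - 1) ^ 4 := by positivity
      linarith
    refine ⟨key hle, fun _ => ⟨hEq, hle⟩, fun h1 => absurd h2 (by omega)⟩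
  · -- case |x|+|y| = 1
    have hcases : (x = 1 ∧ y = 0) ∨ (x = -1 ∧ y = 0) ∨ (x = 0 ∧ y = 1) ∨ (x = 0 ∧ y = -1) := by
      rw [Int.abs_eq_natAbs, Int.abs_eq_natAbs] at h2
      omega
    have habs1 : |x| + |y| = 1 := by
      rw [Int.abs_eq_natAbs, Int.abs_eq_natAbs] at h2 ⊢
      omega
    have hΔ : 4 * srwLyapunovDelta x y = Real.log 126 + (-5) := by
      have : 4 * srwLyapunovDelta x y
          = Real.log (7/2) + Real.log (3/2) + Real.log (3/2) - 4 * Real.log (1/2) + (-5) := by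
        rcases hcases with ⟨hx, hy⟩ | ⟨hx, hy⟩ | ⟨hx, hy⟩ | ⟨hx, hy⟩ <;> subst hx <;> subst hy <;>
          · unfold srwLyapunovDelta srwLyapunov
            norm_num
            ring
      rw [this, aux126]
    have hExp : Real.exp (4 * srwLyapunovDelta x y) = 126 * Real.exp (-5) := by
      rw [hΔ, Real.exp_add, Real.exp_log (by norm_num)]
    have hle : Real.exp (4 * srwLyapunovDelta x y) ≤ 1 := by
      rw [hExp]; linarith [bnd126]
    exact ⟨key hle, fun h => absurd h h2, fun _ => ⟨hExp, bnd126⟩⟩
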